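/- Let p be a prime with p ≡ 1 (mod 3), and let A₁, A₂, A₃ ∈ ℚ_p be nonzero with v_p(A₁) ≡ v_p(A₂) ≡ v_p(A₃) (mod 3) and with A₂/A₃ not a cube in ℚ_p. Let a ∈ ℚ_p satisfy a² = A₁. Then for all w, x₁, x₂, x₃ ∈ ℚ_p satisfying w² = A₁x₁⁶ + A₂x₂⁶ + A₃x₃⁶ and w² ≠ A₁x₁⁶, one has v_p(w − a·x₁³) ≡ v_p(w + a·x₁³) (mod 3). -/

import Mathlib

private lemma padic_val_eq_of_norm_eq {p : ℕ} [hp : Fact p.Prime] {x y : ℚ_[p]}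
    (hx : x ≠ 0) (hy : y ≠ 0) (h : ‖x‖ = ‖y‖) : x.valuation = y.valuation := by
  have hp1 : (1 : ℝ) < p := by exact_mod_cast hp.out.one_lt
  rw [Padic.norm_eq_zpow_neg_valuation hx, Padic.norm_eq_zpow_neg_valuation hy] at h
  have := zpow_right_injective₀ (by linarith : (0:ℝ) < p) (ne_of_gt hp1) h
  omega

private lemma padic_norm_lt_of_val_lt {p : ℕ} [hp : Fact p.Prime] {x y : ℚ_[p]}
    (hx : x ≠ 0) (hy : y ≠ 0) (h : x.valuation < y.valuation) : ‖y‖ < ‖x‖ := by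
  have hp1 : (1 : ℝ) < p := by exact_mod_cast hp.out.one_lt
  rw [Padic.norm_eq_zpow_neg_valuation hx, Padic.norm_eq_zpow_neg_valuation hy]
  exact zpow_lt_zpow_right₀ hp1 (by omega)

private lemma padic_val_neg {p : ℕ} [hp : Fact p.Prime] {x : ℚ_[p]} (hx : x ≠ 0) :
    (-x).valuation = x.valuation :=
  padic_val_eq_of_norm_eq (neg_ne_zero.mpr hx) hx (norm_neg x)

private lemma padic_val_add_left {p : ℕ} [hp : Fact p.Prime] {x y : ℚ_[p]}
    (hx : x ≠ 0) (hy : y ≠ 0) (h : x.valuation < y.valuation) :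
    (x + y).valuation = x.valuation := by
  have hn : ‖y‖ < ‖x‖ := padic_norm_lt_of_val_lt hx hy h
  have hne : ‖x‖ ≠ ‖y‖ := ne_of_gt hn
  have hmax : ‖x + y‖ = ‖x‖ := by
    rw [Padic.add_eq_max_of_ne hne]; exact max_eq_left hn.le
  have hxy : x + y ≠ 0 := by
    intro h0
    rw [h0, norm_zero] at hmax
    exact hx (norm_eq_zero.mp hmax.symm)
  exact padic_val_eq_of_norm_eq hxy hx hmax

private lemma padic_val_pow {p : ℕ} [hp : Fact p.Prime] {x : ℚ_[p]} (hx : x ≠ 0) (n : ℕ) :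
    (x ^ n).valuation = n * x.valuation := by
  induction n with
  | zero => simp [Padic.valuation_one]
  | succ n ih =>
    rw [pow_succ, Padic.valuation_mul (pow_ne_zero _ hx) hx, ih]
    push_cast; ring

private lemma padic_cube_of_close {p : ℕ} [hp : Fact p.Prime] (hpd : ¬ (p : ℤ) ∣ 3)
    {t : ℚ_[p]} (h : ‖t - 1‖ < 1) : ∃ y : ℚ_[p], y ^ 3 = t := by
  have ht1 : ‖t‖ ≤ 1 := by
    have h2 : t = (t - 1) + 1 := by ring
    calc ‖t‖ = ‖(t - 1) + 1‖ := by rw [← h2]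
      _ ≤ max ‖t - 1‖ ‖(1 : ℚ_[p])‖ := Padic.nonarchimedean _ _
      _ ≤ 1 := by rw [norm_one]; exact max_le h.le le_rfl
  set z : ℤ_[p] := ⟨t, ht1⟩ with hz
  set F : Polynomial ℤ_[p] := Polynomial.X ^ 3 - Polynomial.C z with hF
  have heval : F.eval 1 = 1 - z := by simp [hF]
  have hderiv : F.derivative.eval 1 = 3 := by
    simp [hF, Polynomial.derivative_sub, Polynomial.derivative_X_pow]
    norm_num
  have hnorm3 : ‖(3 : ℤ_[p])‖ = 1 := by
    have hle : ‖(3 : ℤ_[p])‖ ≤ 1 := PadicInt.norm_le_one _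
    have := (PadicInt.norm_int_lt_one_iff_dvd 3).not.mpr hpd
    push_cast at this
    rcases lt_or_eq_of_le hle with h' | h'
    · exact absurd h' this
    · exact h'
  have h1z : ‖(1 - z : ℤ_[p])‖ < 1 := by
    have hc : ((1 - z : ℤ_[p]) : ℚ_[p]) = -(t - 1) := by rw [PadicInt.coe_sub, PadicInt.coe_one]; ring
    rw [PadicInt.norm_def, hc, norm_neg]
    exact h
  have hcond : ‖F.eval 1‖ < ‖F.derivative.eval 1‖ ^ 2 := by
    rw [heval, hderiv, hnorm3, one_pow]
    exact h1z
  obtain ⟨r, hr, -⟩ := hensels_lemma hcond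
  have hr3 : r ^ 3 = z := by
    have : Polynomial.aeval r F = r ^ 3 - z := by simp [hF]
    rw [this] at hr
    exact sub_eq_zero.mp hr
  refine ⟨(r : ℚ_[p]), ?_⟩
  have := congrArg (fun x : ℤ_[p] => (x : ℚ_[p])) hr3
  push_cast at this
  rw [this]

/-- Let `p ≡ 1 (mod 3)` be a prime and `A₁, A₂, A₃ ∈ ℚ_p` nonzero with
`v_p(A₁) ≡ v_p(A₂) ≡ v_p(A₃) (mod 3)` and `A₂/A₃` not a cube in `ℚ_p`.
If `a² = A₁`, then every solution of `w² = A₁x₁⁶ + A₂x₂⁶ + A₃x₃⁶` with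
`w² ≠ A₁x₁⁶` satisfies `v_p(w − a·x₁³) ≡ v_p(w + a·x₁³) (mod 3)`. -/
theorem stmt_15 (p : ℕ) [Fact p.Prime] (hp3 : p % 3 = 1)
    (A₁ A₂ A₃ : ℚ_[p]) (h1 : A₁ ≠ 0) (h2 : A₂ ≠ 0) (h3 : A₃ ≠ 0)
    (hv12 : A₁.valuation % 3 = A₂.valuation % 3)
    (hv23 : A₂.valuation % 3 = A₃.valuation % 3)
    (hnc : ¬ ∃ y : ℚ_[p], y ^ 3 = A₂ / A₃)
    (a : ℚ_[p]) (ha : a ^ 2 = A₁)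
    (w x₁ x₂ x₃ : ℚ_[p])
    (heq : w ^ 2 = A₁ * x₁ ^ 6 + A₂ * x₂ ^ 6 + A₃ * x₃ ^ 6)
    (hne : w ^ 2 ≠ A₁ * x₁ ^ 6) :
    (w - a * x₁ ^ 3).valuation % 3 = (w + a * x₁ ^ 3).valuation % 3 := by
  have hp := Fact.out (p := p.Prime)
  have hp2 : p ≠ 2 := by omega
  have hp3' : p ≠ 3 := by omega
  have ha0 : a ≠ 0 := by
    intro h; apply h1; rw [← ha, h]; ring
  set u := w - a * x₁ ^ 3 with hu
  set v := w + a * x₁ ^ 3 with hv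
  have hprod : u * v = w ^ 2 - A₁ * x₁ ^ 6 := by rw [hu, hv, ← ha]; ring
  have hS : u * v = A₂ * x₂ ^ 6 + A₃ * x₃ ^ 6 := by rw [hprod, heq]; ring
  have hS0 : u * v ≠ 0 := by rw [hprod]; exact sub_ne_zero.mpr hne
  have hu0 : u ≠ 0 := left_ne_zero_of_mul hS0
  have hv0 : v ≠ 0 := right_ne_zero_of_mul hS0
  -- Step A : valuation of u*v is ≡ v(A₂) mod 3
  have key : (u * v).valuation % 3 = A₂.valuation % 3 := by
    rw [hS]
    rw [hS] at hS0
    by_cases hx2 : x₂ = 0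
    · have hx3 : x₃ ≠ 0 := by
        intro h; rw [hx2, h] at hS0; simp at hS0
      rw [hx2]
      simp only [zero_pow, mul_zero, zero_add, ne_eq, OfNat.ofNat_ne_zero,
        not_false_eq_true]
      rw [Padic.valuation_mul h3 (pow_ne_zero 6 hx3), padic_val_pow hx3 6]
      push_cast
      omega
    · by_cases hx3 : x₃ = 0
      · rw [hx3]
        simp only [zero_pow, mul_zero, add_zero, ne_eq, OfNat.ofNat_ne_zero,
          not_false_eq_true]
        rw [Padic.valuation_mul h2 (pow_ne_zero 6 hx2), padic_val_pow hx2 6]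
        push_cast
        omega
      · have hs2 : A₂ * x₂ ^ 6 ≠ 0 := mul_ne_zero h2 (pow_ne_zero 6 hx2)
        have hs3 : A₃ * x₃ ^ 6 ≠ 0 := mul_ne_zero h3 (pow_ne_zero 6 hx3)
        have hv2 : (A₂ * x₂ ^ 6).valuation = A₂.valuation + 6 * x₂.valuation := by
          rw [Padic.valuation_mul h2 (pow_ne_zero 6 hx2), padic_val_pow hx2 6]
          push_cast; ring
        have hv3 : (A₃ * x₃ ^ 6).valuation = A₃.valuation + 6 * x₃.valuation := by
          rw [Padic.valuation_mul h3 (pow_ne_zero 6 hx3), padic_val_pow hx3 6]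
          push_cast; ring
        rcases lt_trichotomy (A₂ * x₂ ^ 6).valuation (A₃ * x₃ ^ 6).valuation with hc | hc | hc
        · rw [padic_val_add_left hs2 hs3 hc, hv2]; omega
        · -- equal valuations: show the sum has the same valuation
          have hveq : (A₂ * x₂ ^ 6 + A₃ * x₃ ^ 6).valuation = (A₂ * x₂ ^ 6).valuation := by
            by_contra hcon
            have hge : (A₂ * x₂ ^ 6).valuation < (A₂ * x₂ ^ 6 + A₃ * x₃ ^ 6).valuation := by
              have := Padic.le_valuation_add (x := A₂ * x₂ ^ 6) (y := A₃ * x₃ ^ 6) hS0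
              rw [← hc, min_self] at this
              omega
            -- then -s₂/s₃ is close to 1, hence a cube, contradiction
            have hns : ‖A₂ * x₂ ^ 6‖ = ‖A₃ * x₃ ^ 6‖ := by
              rw [Padic.norm_eq_zpow_neg_valuation hs2, Padic.norm_eq_zpow_neg_valuation hs3, hc]
            have hnlt : ‖A₂ * x₂ ^ 6 + A₃ * x₃ ^ 6‖ < ‖A₃ * x₃ ^ 6‖ := by
              have := padic_norm_lt_of_val_lt hs2 hS0 hge
              rwa [hns] at this
            set t : ℚ_[p] := -(A₂ * x₂ ^ 6) / (A₃ * x₃ ^ 6) with ht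
            have htd : t - 1 = -(A₂ * x₂ ^ 6 + A₃ * x₃ ^ 6) / (A₃ * x₃ ^ 6) := by
              rw [ht]; field_simp; ring
            have hclose : ‖t - 1‖ < 1 := by
              rw [htd, norm_div, norm_neg, div_lt_one (norm_pos_iff.mpr hs3)]
              exact hnlt
            have hpd : ¬ (p : ℤ) ∣ 3 := by
              intro hd
              have hd' : p ∣ 3 := by exact_mod_cast hd
              exact hp3' ((Nat.prime_dvd_prime_iff_eq hp (by norm_num)).mp hd')
            obtain ⟨y, hy⟩ := padic_cube_of_close hpd hclose
            apply hnc
            refine ⟨-y * x₃ ^ 2 / x₂ ^ 2, ?_⟩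
            have hy' : y ^ 3 * (A₃ * x₃ ^ 6) = -(A₂ * x₂ ^ 6) := by
              rw [hy, ht, div_mul_cancel₀ _ hs3]
            field_simp
            linear_combination -hy'
          rw [hveq, hv2]; omega
        · rw [add_comm, padic_val_add_left hs3 hs2 hc, hv3]; omega
  -- Step B
  rcases eq_or_ne u.valuation v.valuation with h | h
  · rw [h]
  · have hx1 : x₁ ≠ 0 := by
      rintro rfl
      apply h
      rw [hu, hv]
      ring_nf
    have hx13 : a * x₁ ^ 3 ≠ 0 := mul_ne_zero ha0 (pow_ne_zero 3 hx1)
    have h20 : (2 : ℚ_[p]) ≠ 0 := two_ne_zero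
    have hval2 : (u * v).valuation = u.valuation + v.valuation :=
      Padic.valuation_mul hu0 hv0
    have hA1v : A₁.valuation = 2 * a.valuation := by
      rw [← ha, padic_val_pow ha0 2]; push_cast; ring
    have h2v : ((2 : ℚ_[p])).valuation = 0 := by
      rw [Padic.valuation_ofNat]
      have hnd : ¬ p ∣ 2 := fun hd => hp2 ((Nat.prime_dvd_prime_iff_eq hp Nat.prime_two).mp hd)
      simp [padicValNat.eq_zero_of_not_dvd hnd]
    have hm : (2 * (a * x₁ ^ 3)).valuation = a.valuation + 3 * x₁.valuation := by
      rw [Padic.valuation_mul h20 hx13, h2v,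
        Padic.valuation_mul ha0 (pow_ne_zero 3 hx1), padic_val_pow hx1 3]
      push_cast; ring
    rw [hval2] at key
    rcases h.lt_or_gt with hlt | hlt
    · have hadd : (-u + v).valuation = (-u).valuation :=
        padic_val_add_left (neg_ne_zero.mpr hu0) hv0 (by rw [padic_val_neg hu0]; exact hlt)
      have heq2 : -u + v = 2 * (a * x₁ ^ 3) := by rw [hu, hv]; ring
      have hu_val : u.valuation = a.valuation + 3 * x₁.valuation := by
        rw [← padic_val_neg hu0, ← hadd, heq2, hm]
      omega
    · have hadd : (-v + u).valuation = (-v).valuation :=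
        padic_val_add_left (neg_ne_zero.mpr hv0) hu0 (by rw [padic_val_neg hv0]; exact hlt)
      have heq2 : -v + u = -(2 * (a * x₁ ^ 3)) := by rw [hu, hv]; ring
      have hv_val : v.valuation = a.valuation + 3 * x₁.valuation := by
        rw [← padic_val_neg hv0, ← hadd, heq2, padic_val_neg (by simpa using hx13), hm]
      omega
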